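/- Let Q1 and Q2 be probability measures on the real line with Q1 ≤_lr Q2. Let [a1,b1] and [a2,b2] be intervals in the extended real line [−∞,∞] with a1 ≤ a2, b1 ≤ b2, Q1([a1,b1] ∩ ℝ) > 0 and Q2([a2,b2] ∩ ℝ) > 0. Then the conditional distributions satisfy Q1(· | [a1,b1]) ≤_lr Q2(· | [a2,b2]), where Q_j(· | [a_j,b_j]) denotes the measure B ↦ Q_j(B ∩ [a_j,b_j])/Q_j([a_j,b_j]). -/

import Mathlib

open MeasureTheory Set Filter

noncomputable section

/-- `g` is a (measurable, nonnegative) density of `Q` with respect to `μ`,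
i.e. `Q B = ∫_B g dμ` for all Borel sets `B`. -/
def IsDensity (Q μ : Measure ℝ) (g : ℝ → ENNReal) : Prop :=
  Measurable g ∧ ∀ B : Set ℝ, MeasurableSet B → Q B = ∫⁻ x in B, g x ∂μ

/-- Likelihood ratio order `Q1 ≤_lr Q2`: there exist a σ-finite measure `μ` and densities
`g1 = dQ1/dμ`, `g2 = dQ2/dμ` such that the ratio `g2/g1` (with values in `[0,∞]`)
is nondecreasing on the set `{g1 + g2 > 0}`. -/
def LikelihoodRatioLE (Q1 Q2 : Measure ℝ) : Prop :=
  ∃ (μ : Measure ℝ) (g1 g2 : ℝ → ENNReal), SigmaFinite μ ∧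
    IsDensity Q1 μ g1 ∧ IsDensity Q2 μ g2 ∧
    ∀ x y : ℝ, x ≤ y → 0 < g1 x + g2 x → 0 < g1 y + g2 y →
      g2 x / g1 x ≤ g2 y / g1 y

/-- Multiplying numerator and denominator by fixed nonzero finite constants
preserves inequalities between `ENNReal` quotients. -/
lemma mul_div_mul_le_mul_div_mul {c1 c2 a b a' b' : ENNReal} (hc1 : c1 ≠ 0)
    (hc1t : c1 ≠ ⊤) (h : a / b ≤ a' / b') : c2 * a / (c1 * b) ≤ c2 * a' / (c1 * b') := by
  have e : ∀ u v : ENNReal, c2 * u / (c1 * v) = c2 * c1⁻¹ * (u / v) := by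
    intro u v
    rw [div_eq_mul_inv, div_eq_mul_inv, ENNReal.mul_inv (Or.inl hc1) (Or.inl hc1t)]
    ring
  rw [e, e]
  gcongr

/-- The conditional measure has density `(Q C)⁻¹ • C.indicator g`. -/
lemma isDensity_cond {Q μ : Measure ℝ} {g : ℝ → ENNReal} (hg : IsDensity Q μ g)
    {C : Set ℝ} (hC : MeasurableSet C) :
    IsDensity (ProbabilityTheory.cond Q C) μ (fun x => (Q C)⁻¹ * C.indicator g x) := by
  obtain ⟨hgm, hgi⟩ := hg
  refine ⟨(hgm.indicator hC).const_mul _, fun B hB => ?_⟩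
  rw [ProbabilityTheory.cond_apply hC, lintegral_const_mul _ (hgm.indicator hC)]
  congr 1
  rw [lintegral_indicator hC, Measure.restrict_restrict hC,
    ← hgi (C ∩ B) (hC.inter hB)]

theorem stmt_17 (Q1 Q2 : Measure ℝ) [IsProbabilityMeasure Q1] [IsProbabilityMeasure Q2]
    (hlr : LikelihoodRatioLE Q1 Q2)
    (a1 b1 a2 b2 : EReal) (ha : a1 ≤ a2) (hb : b1 ≤ b2)
    (h1 : 0 < Q1 {x : ℝ | a1 ≤ (x : EReal) ∧ (x : EReal) ≤ b1})
    (h2 : 0 < Q2 {x : ℝ | a2 ≤ (x : EReal) ∧ (x : EReal) ≤ b2}) :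
    LikelihoodRatioLE
      (ProbabilityTheory.cond Q1 {x : ℝ | a1 ≤ (x : EReal) ∧ (x : EReal) ≤ b1})
      (ProbabilityTheory.cond Q2 {x : ℝ | a2 ≤ (x : EReal) ∧ (x : EReal) ≤ b2}) := by
  obtain ⟨μ, g1, g2, hσ, hg1, hg2, hmono⟩ := hlr
  set C1 : Set ℝ := {x : ℝ | a1 ≤ (x : EReal) ∧ (x : EReal) ≤ b1} with hC1def
  set C2 : Set ℝ := {x : ℝ | a2 ≤ (x : EReal) ∧ (x : EReal) ≤ b2} with hC2def
  have mC1 : MeasurableSet C1 := by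
    have : C1 = (fun x : ℝ => (x : EReal)) ⁻¹' (Icc a1 b1) := rfl
    rw [this]
    exact measurableSet_Icc.preimage continuous_coe_real_ereal.measurable
  have mC2 : MeasurableSet C2 := by
    have : C2 = (fun x : ℝ => (x : EReal)) ⁻¹' (Icc a2 b2) := rfl
    rw [this]
    exact measurableSet_Icc.preimage continuous_coe_real_ereal.measurable
  have hc1ne : (Q1 C1)⁻¹ ≠ 0 := by
    simp [measure_ne_top Q1 C1]
  have hc1t : (Q1 C1)⁻¹ ≠ ⊤ := ENNReal.inv_ne_top.2 h1.ne'
  refine ⟨μ, _, _, hσ, isDensity_cond hg1 mC1, isDensity_cond hg2 mC2, ?_⟩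
  intro x y hxy hx hy
  by_cases hy1 : (Q1 C1)⁻¹ * C1.indicator g1 y = 0
  · -- denominator at y is zero, numerator at y is positive, so RHS = ∞
    have hy2 : (Q2 C2)⁻¹ * C2.indicator g2 y ≠ 0 := by
      intro h0
      rw [hy1, h0] at hy
      simp at hy
    rw [hy1, ENNReal.div_zero hy2]
    exact le_top
  · by_cases hx2 : (Q2 C2)⁻¹ * C2.indicator g2 x = 0
    · rw [hx2, ENNReal.zero_div]
      exact zero_le
    · -- both indicators are forced: y ∈ C1 with g1 y ≠ 0, x ∈ C2 with g2 x ≠ 0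
      have hyC1 : y ∈ C1 := by
        by_contra hyn
        rw [indicator_of_notMem hyn] at hy1
        simp at hy1
      have hxC2 : x ∈ C2 := by
        by_contra hxn
        rw [indicator_of_notMem hxn] at hx2
        simp at hx2
      have hg1y : g1 y ≠ 0 := by
        rw [indicator_of_mem hyC1] at hy1
        intro h0; rw [h0] at hy1; simp at hy1
      have hg2x : g2 x ≠ 0 := by
        rw [indicator_of_mem hxC2] at hx2
        intro h0; rw [h0] at hx2; simp at hx2
      have hxy' : (x : EReal) ≤ (y : EReal) := EReal.coe_le_coe_iff.2 hxy
      have hxC1 : x ∈ C1 := ⟨le_trans ha hxC2.1, le_trans hxy' hyC1.2⟩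
      have hyC2 : y ∈ C2 := ⟨le_trans hxC2.1 hxy', le_trans hyC1.2 hb⟩
      rw [indicator_of_mem hxC1, indicator_of_mem hxC2, indicator_of_mem hyC1,
        indicator_of_mem hyC2]
      refine mul_div_mul_le_mul_div_mul hc1ne hc1t ?_
      exact hmono x y hxy (pos_iff_ne_zero.2 (by simp [hg2x])) (pos_iff_ne_zero.2 (by simp [hg1y]))
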